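/- Let A ∈ ℝ^{m×d}, V a subspace of ℝ^d, N a 1/2-net for the unit sphere of V consisting of unit vectors, and N⁺ = {x + y : x, y ∈ N ∪ {0}}. There is an absolute constant C such that: if ‖Av‖² ∈ (1 ± ε)‖v‖² for all v ∈ N⁺ (for some ε ∈ (0,1)), then ‖Ax‖² ∈ (1 ± Cε) for every unit vector x ∈ V. -/

import Mathlib

set_option maxHeartbeats 1000000

open scoped RealInnerProductSpace

theorem stmt17 :
    ∃ C : ℝ, 0 < C ∧
      ∀ (m d : ℕ) (A : Matrix (Fin m) (Fin d) ℝ)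
        (V : Submodule ℝ (EuclideanSpace ℝ (Fin d)))
        (N : Set (EuclideanSpace ℝ (Fin d))) (ε : ℝ), 0 < ε → ε < 1 →
        (∀ x ∈ N, x ∈ V ∧ ‖x‖ = 1) →
        (∀ x ∈ V, ‖x‖ = 1 → ∃ y ∈ N, ‖x - y‖ ≤ 1 / 2) →
        (∀ v ∈ {z : EuclideanSpace ℝ (Fin d) |
            ∃ a ∈ N ∪ {0}, ∃ b ∈ N ∪ {0}, z = a + b},
          |‖Matrix.toEuclideanLin A v‖ ^ 2 - ‖v‖ ^ 2| ≤ ε * ‖v‖ ^ 2) →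
        ∀ x ∈ V, ‖x‖ = 1 → |‖Matrix.toEuclideanLin A x‖ ^ 2 - 1| ≤ C * ε := by
  refine ⟨12, by norm_num, ?_⟩
  intro m d A V N ε hε hε1 hN hnet hplus0 x hxV hx1
  set L : EuclideanSpace ℝ (Fin d) →ₗ[ℝ] EuclideanSpace ℝ (Fin m) :=
    Matrix.toEuclideanLin A with hL
  set B : EuclideanSpace ℝ (Fin d) → EuclideanSpace ℝ (Fin d) → ℝ :=
    fun u v => (inner ℝ (L u) (L v) : ℝ) - (inner ℝ u v : ℝ) with hBdef
  have hBsymm : ∀ u v, B u v = B v u := by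
    intro u v; simp only [hBdef]
    rw [real_inner_comm (L u), real_inner_comm u]
  have hBadd : ∀ u v w, B u (v + w) = B u v + B u w := by
    intro u v w; simp only [hBdef, map_add, inner_add_right]; ring
  have hBaddl : ∀ u v w, B (u + v) w = B u w + B v w := by
    intro u v w; rw [hBsymm, hBadd, hBsymm w u, hBsymm w v]
  have hBsmul : ∀ (c : ℝ) u v, B u (c • v) = c * B u v := by
    intro c u v; simp only [hBdef, map_smul, real_inner_smul_right]; ring
  have hBsmull : ∀ (c : ℝ) u v, B (c • u) v = c * B u v := by
    intro c u v; rw [hBsymm, hBsmul, hBsymm]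
  have hBdiag : ∀ v, B v v = ‖L v‖ ^ 2 - ‖v‖ ^ 2 := by
    intro v
    simp only [hBdef, real_inner_self_eq_norm_sq]
  have hplus : ∀ v ∈ {z : EuclideanSpace ℝ (Fin d) |
      ∃ a ∈ N ∪ {0}, ∃ b ∈ N ∪ {0}, z = a + b}, |B v v| ≤ ε * ‖v‖ ^ 2 := by
    intro v hv; rw [hBdiag]; exact hplus0 v hv
  -- cross bound on net points
  have hyy : ∀ y ∈ N, ∀ y' ∈ N, |B y y'| ≤ 3 * ε := by
    intro y hy y' hy'
    have h1 := hplus (y + y') ⟨y, Or.inl hy, y', Or.inl hy', rfl⟩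
    have h2 := hplus y ⟨y, Or.inl hy, 0, Or.inr rfl, (add_zero y).symm⟩
    have h3 := hplus y' ⟨y', Or.inl hy', 0, Or.inr rfl, (add_zero y').symm⟩
    have hny : ‖y‖ = 1 := (hN y hy).2
    have hny' : ‖y'‖ = 1 := (hN y' hy').2
    have hsum : ‖y + y'‖ ^ 2 ≤ 4 := by
      have := norm_add_le y y'
      nlinarith [norm_nonneg (y + y')]
    have hexp : B (y + y') (y + y') = B y y + B y' y' + 2 * B y y' := by
      rw [hBadd, hBaddl, hBaddl, hBsymm y' y]; ring
    rw [hny] at h2; rw [hny'] at h3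
    have h1' : |B (y + y') (y + y')| ≤ 4 * ε := by
      refine h1.trans ?_
      nlinarith
    rw [hexp] at h1'
    rw [abs_le] at h1' h2 h3 ⊢
    constructor <;> nlinarith
  -- the unit sphere of V
  set S : Set (EuclideanSpace ℝ (Fin d)) := {v | v ∈ V ∧ ‖v‖ = 1} with hSdef
  have hScompact : IsCompact S := by
    have hSeq : S = (V : Set (EuclideanSpace ℝ (Fin d))) ∩ Metric.sphere 0 1 := by
      ext v
      simp [hSdef, mem_sphere_iff_norm]
    rw [hSeq]
    exact (isCompact_sphere (0 : EuclideanSpace ℝ (Fin d)) 1).inter_left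
      (Submodule.closed_of_finiteDimensional V)
  have hxS : x ∈ S := ⟨hxV, hx1⟩
  have hLc : Continuous L := L.continuous_of_finiteDimensional
  have hBc : Continuous (fun p : EuclideanSpace ℝ (Fin d) × EuclideanSpace ℝ (Fin d) =>
      B p.1 p.2) := by
    apply Continuous.sub
    · exact Continuous.inner (hLc.comp continuous_fst) (hLc.comp continuous_snd)
    · exact Continuous.inner continuous_fst continuous_snd
  -- rescaling helper
  have hscale : ∀ z : EuclideanSpace ℝ (Fin d), z ∈ V → z ≠ 0 →
      (‖z‖⁻¹ • z) ∈ S := by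
    intro z hzV hz0
    have hzn : ‖z‖ ≠ 0 := norm_ne_zero_iff.mpr hz0
    refine ⟨V.smul_mem _ hzV, ?_⟩
    rw [norm_smul]
    simp [hzn]
  -- Step A : |B y v| ≤ 6ε for y ∈ N, v ∈ S
  have stepA : ∀ y ∈ N, ∀ v ∈ S, |B y v| ≤ 6 * ε := by
    intro y hy
    obtain ⟨v₀, hv₀S, hmax⟩ := hScompact.exists_isMaxOn ⟨x, hxS⟩
      ((continuous_abs.comp (hBc.comp (Continuous.prodMk_right y))).continuousOn)
    have hmax' : ∀ v ∈ S, |B y v| ≤ |B y v₀| := fun v hv => hmax hv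
    suffices hF : |B y v₀| ≤ 6 * ε by
      intro v hv; exact (hmax' v hv).trans hF
    obtain ⟨y', hy', hdist⟩ := hnet v₀ hv₀S.1 hv₀S.2
    set z := v₀ - y' with hz
    have hzV : z ∈ V := V.sub_mem hv₀S.1 (hN y' hy').1
    have hsplit : B y v₀ = B y y' + B y z := by
      rw [← hBadd]; congr 1; rw [hz]; abel
    have h1 : |B y y'| ≤ 3 * ε := hyy y hy y' hy'
    have hkey : |B y z| ≤ (1 / 2) * |B y v₀| := by
      by_cases hz0 : z = 0
      · have h0 : B y z = 0 := by simp [hz0, hBdef]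
        rw [h0, abs_zero]; positivity
      · have hzn : ‖z‖ ≠ 0 := norm_ne_zero_iff.mpr hz0
        have heq : B y z = ‖z‖ * B y (‖z‖⁻¹ • z) := by
          rw [hBsmul]; field_simp
        rw [heq, abs_mul, abs_of_nonneg (norm_nonneg z)]
        have h2 := hmax' _ (hscale z hzV hz0)
        calc ‖z‖ * |B y (‖z‖⁻¹ • z)| ≤ ‖z‖ * |B y v₀| :=
              mul_le_mul_of_nonneg_left h2 (norm_nonneg z)
          _ ≤ (1 / 2) * |B y v₀| :=
              mul_le_mul_of_nonneg_right hdist (abs_nonneg _)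
    have := abs_add_le (B y y') (B y z)
    rw [← hsplit] at this
    linarith
  -- Step B : sup over pairs
  obtain ⟨p₀, hp₀, hmaxB⟩ := (hScompact.prod hScompact).exists_isMaxOn
    ⟨(x, x), hxS, hxS⟩ ((continuous_abs.comp hBc).continuousOn)
  have hmaxB' : ∀ u ∈ S, ∀ v ∈ S, |B u v| ≤ |B p₀.1 p₀.2| := by
    intro u hu v hv
    have h := isMaxOn_iff.mp hmaxB (u, v) (Set.mk_mem_prod hu hv)
    simpa using h
  have hSbound : |B p₀.1 p₀.2| ≤ 12 * ε := by
    obtain ⟨hu₀S, hv₀S⟩ := hp₀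
    obtain ⟨y, hy, hdist⟩ := hnet p₀.1 hu₀S.1 hu₀S.2
    set z := p₀.1 - y with hz
    have hzV : z ∈ V := V.sub_mem hu₀S.1 (hN y hy).1
    have hsplit : B p₀.1 p₀.2 = B y p₀.2 + B z p₀.2 := by
      rw [← hBaddl]; congr 1; rw [hz]; abel
    have h1 : |B y p₀.2| ≤ 6 * ε := stepA y hy _ hv₀S
    have hkey : |B z p₀.2| ≤ (1 / 2) * |B p₀.1 p₀.2| := by
      by_cases hz0 : z = 0
      · have h0 : B z p₀.2 = 0 := by simp [hz0, hBdef]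
        rw [h0, abs_zero]; positivity
      · have hzn : ‖z‖ ≠ 0 := norm_ne_zero_iff.mpr hz0
        have heq : B z p₀.2 = ‖z‖ * B (‖z‖⁻¹ • z) p₀.2 := by
          rw [hBsmull]; field_simp
        rw [heq, abs_mul, abs_of_nonneg (norm_nonneg z)]
        have h2 := hmaxB' _ (hscale z hzV hz0) _ hv₀S
        calc ‖z‖ * |B (‖z‖⁻¹ • z) p₀.2| ≤ ‖z‖ * |B p₀.1 p₀.2| :=
              mul_le_mul_of_nonneg_left h2 (norm_nonneg z)
          _ ≤ (1 / 2) * |B p₀.1 p₀.2| :=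
              mul_le_mul_of_nonneg_right hdist (abs_nonneg _)
    have := abs_add_le (B y p₀.2) (B z p₀.2)
    rw [← hsplit] at this
    linarith
  have hfin : |B x x| ≤ 12 * ε := (hmaxB' x hxS x hxS).trans hSbound
  rw [hBdiag, hx1] at hfin
  simpa using hfin
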